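/- With the above data, for every s ≥ 2 the following identity holds in M: s_1 ∘ s_2 ∘ ⋯ ∘ s_{s−1}(ν_s) = ν_s + Σ_{i=1}^{s−1} b_i ν_i, where b_i = Σ (−1)^m a_{i_0,i_1} a_{i_1,i_2} ⋯ a_{i_{m−1},i_m}, the sum over all chains i = i_0 < i_1 < ⋯ < i_m = s with m ≥ 1. (Applied to sequences of simple roots, this expresses the roots β_j = s_{μ_1}⋯s_{μ_{j−1}}μ_j in terms of Cartan numbers, and is the key identity relating the combinatorial data of a Bott tower to that of the corresponding Bott–Samelson variety.) -/
import Mathlib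

/-- Product of the values `a i j` along consecutive entries of a list. -/
def pathProdR {R : Type*} [CommRing R] {S : ℕ} (a : Fin S → Fin S → R) :
    List (Fin S) → R
  | [] => 1
  | [_] => 1
  | i :: j :: t => a i j * pathProdR a (j :: t)

/-- `b_i = Σ (−1)^m a_{i_0,i_1}a_{i_1,i_2}⋯a_{i_{m−1},i_m}`, the sum over all chains
`i = i_0 < i_1 < ⋯ < i_m = l` with `m ≥ 1` (a chain is identified with the set `T` of
its intermediate indices, and `m = T.card + 1`). -/
def chainB {R : Type*} [CommRing R] {S : ℕ} (a : Fin S → Fin S → R) (i l : Fin S) : R :=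
  ∑ T ∈ (Finset.univ.filter (fun j => i < j ∧ j < l)).powerset,
    (-1) ^ (T.card + 1) * pathProdR a (i :: (T.sort (· ≤ ·) ++ [l]))

lemma chainB_rec {R : Type*} [CommRing R] {S : ℕ} (a : Fin S → Fin S → R) (j L : Fin S) :
    chainB a j L = - a j L - ∑ i ∈ Finset.univ.filter (fun x => j < x ∧ x < L),
      a j i * chainB a i L := by
  suffices H : ∀ c : ℕ, ∀ u j : Fin S,
      (Finset.univ.filter (fun x => u < x ∧ x < L)).card = c →
      (∑ T ∈ (Finset.univ.filter (fun x => u < x ∧ x < L)).powerset,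
        (-1 : R) ^ (T.card + 1) * pathProdR a (j :: (T.sort (· ≤ ·) ++ [L])))
      = - a j L - ∑ i ∈ Finset.univ.filter (fun x => u < x ∧ x < L),
          a j i * chainB a i L by
    exact H _ j j rfl
  intro c
  induction c using Nat.strong_induction_on with
  | _ c IH =>
    intro u j hc
    rcases Finset.eq_empty_or_nonempty
        (Finset.univ.filter (fun x : Fin S => u < x ∧ x < L)) with he | hne
    · rw [he]; simp [pathProdR]
    · set s := Finset.univ.filter (fun x : Fin S => u < x ∧ x < L) with hs
      set m := s.min' hne with hm
      have hmem : m ∈ s := Finset.min'_mem _ _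
      have hum : u < m ∧ m < L := by
        have := hmem; rw [hs] at this; simpa using this
      set s' := Finset.univ.filter (fun x : Fin S => m < x ∧ x < L) with hs'
      have hmns' : m ∉ s' := by simp [hs']
      have hss : s = insert m s' := by
        ext x
        simp only [hs, hs', Finset.mem_insert, Finset.mem_filter, Finset.mem_univ, true_and]
        constructor
        · rintro ⟨h1, h2⟩
          rcases eq_or_ne x m with h | h
          · exact Or.inl h
          · exact Or.inr ⟨lt_of_le_of_ne (Finset.min'_le s x (by simp [hs, h1, h2])) (Ne.symm h), h2⟩
        · rintro (rfl | ⟨h1, h2⟩)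
          · exact hum
          · exact ⟨hum.1.trans h1, h2⟩
      have hcard : s'.card < c := by
        rw [← hc, hss, Finset.card_insert_of_notMem hmns']; omega
      rw [hss, Finset.sum_powerset_insert hmns']
      rw [IH s'.card hcard m j rfl]
      have h2 : (∑ T ∈ s'.powerset,
          (-1 : R) ^ ((insert m T).card + 1) *
            pathProdR a (j :: ((insert m T).sort (· ≤ ·) ++ [L])))
          = - (a j m * chainB a m L) := by
        rw [chainB, ← hs', Finset.mul_sum, ← Finset.sum_neg_distrib]
        apply Finset.sum_congr rfl
        intro T hT
        rw [Finset.mem_powerset] at hT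
        have hmT : m ∉ T := fun h => hmns' (hT h)
        have hle : ∀ b ∈ T, m ≤ b := by
          intro b hb
          have h' : m < b ∧ b < L := by have := hT hb; rw [hs'] at this; simpa using this
          exact h'.1.le
        rw [Finset.sort_insert (· ≤ ·) hle hmT, Finset.card_insert_of_notMem hmT]
        have : pathProdR a (j :: (m :: T.sort (· ≤ ·) ++ [L]))
            = a j m * pathProdR a (m :: (T.sort (· ≤ ·) ++ [L])) := by
          simp [pathProdR]
        simp only [List.cons_append] at this ⊢
        rw [this]
        ring
      rw [h2, Finset.sum_insert hmns']
      ring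

/-- Let `ν_1, …, ν_S ∈ M` and `φ_1, …, φ_S : M → R` be linear with `φ_k(ν_k) = 2`,
and let `s_k(x) = x − φ_k(x)ν_k` be the corresponding reflections and
`a_{k,l} = φ_k(ν_l)` the Cartan numbers.  Then for `S ≥ 2`,
`s_1 ∘ s_2 ∘ ⋯ ∘ s_{S−1}(ν_S) = ν_S + Σ_{i=1}^{S−1} b_i ν_i`, where
`b_i = Σ (−1)^m a_{i_0,i_1}⋯a_{i_{m−1},i_m}` summed over chains
`i = i_0 < i_1 < ⋯ < i_m = S`, `m ≥ 1`. -/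
theorem reflection_chain_formula {R M : Type*} [CommRing R] [AddCommGroup M]
    [Module R M] (S : ℕ) (hS : 2 ≤ S) (ν : Fin S → M) (φ : Fin S → (M →ₗ[R] R))
    (hφ : ∀ k, φ k (ν k) = 2) :
    ((List.ofFn (fun k : Fin (S - 1) =>
          (fun x => x - φ (Fin.castLE (Nat.sub_le S 1) k) x •
              ν (Fin.castLE (Nat.sub_le S 1) k) : M → M))).foldr (· ∘ ·) id)
        (ν ⟨S - 1, by omega⟩)
      = ν ⟨S - 1, by omega⟩
        + ∑ i ∈ Finset.univ.filter (fun i => i < (⟨S - 1, by omega⟩ : Fin S)),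
            chainB (fun k l => φ k (ν l)) i ⟨S - 1, by omega⟩ • ν i := by
  have hL : S - 1 < S := by omega
  set L : Fin S := ⟨S - 1, hL⟩ with hLdef
  set a : Fin S → Fin S → R := fun k l => φ k (ν l) with ha
  set f : Fin (S - 1) → M → M := fun k =>
    (fun x => x - φ (Fin.castLE (Nat.sub_le S 1) k) x •
        ν (Fin.castLE (Nat.sub_le S 1) k) : M → M) with hf
  have key : ∀ m n, n + m = S - 1 →
      (((List.ofFn f).drop n).foldr (· ∘ ·) id) (ν L)
        = ν L + ∑ i ∈ Finset.univ.filter (fun i : Fin S => n ≤ i.val ∧ i < L),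
            chainB a i L • ν i := by
    intro m
    induction m with
    | zero =>
      intro n hn
      have h1 : (List.ofFn f).drop n = [] := by
        apply List.drop_eq_nil_of_le; simp; omega
      have h2 : Finset.univ.filter (fun i : Fin S => n ≤ i.val ∧ i < L) = ∅ := by
        ext i; simp only [Finset.mem_filter, Finset.mem_univ, true_and, Finset.notMem_empty,
          iff_false, not_and, not_lt, hLdef, Fin.lt_def]
        omega
      rw [h1, h2]; simp
    | succ m IH =>
      intro n hn
      have hn1 : n < (List.ofFn f).length := by simp; omega
      have hnS : n < S - 1 := by omega
      rw [List.drop_eq_getElem_cons hn1, List.foldr_cons]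
      have hget : (List.ofFn f)[n] = f ⟨n, by simpa using hn1⟩ := List.getElem_ofFn ..
      rw [hget]
      set n' : Fin S := Fin.castLE (Nat.sub_le S 1) ⟨n, by simpa using hn1⟩ with hn'
      have hn'v : n'.val = n := rfl
      set s₁ := Finset.univ.filter (fun i : Fin S => n + 1 ≤ i.val ∧ i < L) with hs₁
      have hIH := IH (n + 1) (by omega)
      simp only [Function.comp_apply, hIH]
      -- compute f applied
      have hfn : ∀ y : M, f ⟨n, by simpa using hn1⟩ y = y - φ n' y • ν n' := fun y => rfl
      rw [hfn]
      have hn's₁ : n' ∉ s₁ := by simp [hs₁, hn'v]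
      have hsplit : Finset.univ.filter (fun i : Fin S => n ≤ i.val ∧ i < L)
          = insert n' s₁ := by
        ext i
        simp only [hs₁, Finset.mem_insert, Finset.mem_filter, Finset.mem_univ, true_and,
          Fin.ext_iff, hn'v, hLdef, Fin.lt_def]
        omega
      have hrec : chainB a n' L
          = - a n' L - ∑ i ∈ s₁, a n' i * chainB a i L := by
        have hseq : Finset.univ.filter (fun x : Fin S => n' < x ∧ x < L) = s₁ := by
          ext i
          simp only [hs₁, Finset.mem_filter, Finset.mem_univ, true_and, Fin.lt_def, hn'v]
          omega
        rw [chainB_rec a n' L, hseq]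
      have hφy : φ n' (ν L + ∑ i ∈ s₁, chainB a i L • ν i)
          = a n' L + ∑ i ∈ s₁, chainB a i L * a n' i := by
        simp [map_add, map_sum, map_smul, smul_eq_mul, ha]
      rw [hφy, hsplit, Finset.sum_insert hn's₁, hrec]
      have : ∑ i ∈ s₁, chainB a i L * a n' i = ∑ i ∈ s₁, a n' i * chainB a i L := by
        apply Finset.sum_congr rfl; intros; ring
      rw [this]
      module
  have hfin := key (S - 1) 0 (by omega)
  rw [List.drop_zero] at hfin
  have hset : Finset.univ.filter (fun i : Fin S => 0 ≤ i.val ∧ i < L)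
      = Finset.univ.filter (fun i : Fin S => i < L) := by
    ext i; simp
  rw [hset] at hfin
  exact hfin
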